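/- For every integer n ≥ 2 and every real t ∈ [0,1], the quantity μ₀(n,t) = ((3-2n)t + 1 - 2n + sqrt((1-t)·((4n-5)t + 4n² - 4n + 1)))/(2(n-1)²) satisfies μ₀(n,t) ≤ -t/n. -/
import Mathlib


/-- For every integer `n ≥ 2` and `t ∈ [0,1]`, the quantity
`μ₀(n,t) = ((3-2n)t + 1 - 2n + √((1-t)((4n-5)t + 4n² - 4n + 1)))/(2(n-1)²)`
satisfies `μ₀(n,t) ≤ -t/n`. -/
theorem stmt0 (n : ℕ) (hn : 2 ≤ n) (t : ℝ) (ht0 : 0 ≤ t) (ht1 : t ≤ 1) :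
    ((3 - 2*(n:ℝ))*t + 1 - 2*(n:ℝ) +
        Real.sqrt ((1 - t) * ((4*(n:ℝ) - 5)*t + 4*(n:ℝ)^2 - 4*(n:ℝ) + 1)))
      / (2*((n:ℝ) - 1)^2) ≤ -t/(n:ℝ) := by
  have hn' : (2:ℝ) ≤ (n:ℝ) := by exact_mod_cast hn
  have hn0 : (0:ℝ) < (n:ℝ) := by linarith
  set X := (1 - t) * ((4*(n:ℝ) - 5)*t + 4*(n:ℝ)^2 - 4*(n:ℝ) + 1) with hX
  have key : Real.sqrt X ≤ (((n:ℝ)-2)*t + (2*(n:ℝ)-1)*(n:ℝ))/(n:ℝ) := by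
    rw [Real.sqrt_le_iff]
    constructor
    · apply div_nonneg _ hn0.le
      nlinarith
    · rw [div_pow, le_div_iff₀ (by positivity)]
      nlinarith [sq_nonneg t, mul_nonneg ht0 (sq_nonneg ((n:ℝ)-1)),
        mul_nonneg (mul_nonneg ht0 ht0) hn0.le,
        mul_nonneg (mul_nonneg ht0 hn0.le) hn0.le]
  have hsn : Real.sqrt X * (n:ℝ) ≤ ((n:ℝ)-2)*t + (2*(n:ℝ)-1)*(n:ℝ) :=
    (le_div_iff₀ hn0).mp key
  have h2 : (0:ℝ) < 2*((n:ℝ)-1)^2 := by nlinarith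
  rw [div_le_iff₀ h2]
  have heq : -t/(n:ℝ) * (2*((n:ℝ)-1)^2) = (-t*(2*((n:ℝ)-1)^2))/(n:ℝ) := by ring
  rw [heq, le_div_iff₀ hn0]
  nlinarith [hsn]
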